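/- Let G be a real symmetric 2×2 matrix with det G < 0, so that g(u,v) = uᵀGv is a Lorentzian inner product on ℝ², and let A be a real 2×2 matrix with AᵀG = GA and det A = 1. Then there exists a real 2×2 matrix a with aᵀG = Ga and exp(a) = A if and only if tr A > −2 or A = −1 (minus the identity matrix). Equivalently, the Lorentzian inner products g and g(A·,·), which have the same volume form, can be joined by a geodesic in the space of Lorentzian inner products with that fixed volume form precisely under this condition on A. -/

import Mathlib

open Matrix NormedSpace

local notation "M2" => Matrix (Fin 2) (Fin 2) ℝ

private lemma sq_of_traceless (a : Matrix (Fin 2) (Fin 2) ℝ) (h : a.trace = 0) :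
    a * a = (-a.det) • (1 : Matrix (Fin 2) (Fin 2) ℝ) := by
  have h1 : a 1 1 = -a 0 0 := by
    rw [Matrix.trace_fin_two] at h; linarith
  ext i j
  fin_cases i <;> fin_cases j <;>
    simp [Matrix.mul_apply, Fin.sum_univ_two, Matrix.det_fin_two, Matrix.one_apply, h1] <;> ring

private lemma det_comb (b : Matrix (Fin 2) (Fin 2) ℝ) (hb : b.trace = 0) (c s : ℝ) :
    (c • (1 : Matrix (Fin 2) (Fin 2) ℝ) + s • b).det = c^2 + s^2 * b.det := by
  have h1 : b 1 1 = -b 0 0 := by rw [Matrix.trace_fin_two] at hb; linarith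
  simp [Matrix.det_fin_two, Matrix.one_apply, h1]
  ring

private lemma trace_comb (b : Matrix (Fin 2) (Fin 2) ℝ) (hb : b.trace = 0) (c s : ℝ) :
    (c • (1 : Matrix (Fin 2) (Fin 2) ℝ) + s • b).trace = 2 * c := by
  simp [Matrix.trace_smul, hb]; ring

private noncomputable def phiC (a : M2) (t : ℝ) (ht : t ≠ 0) (h : a * a = (-(t*t)) • (1 : M2)) :
    ℂ →+* M2 where
  toFun z := z.re • (1 : M2) + (z.im / t) • a
  map_one' := by simp
  map_zero' := by simp
  map_add' x y := by
    simp only [Complex.add_re, Complex.add_im, add_smul, add_div]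
    abel
  map_mul' x y := by
    simp only [Complex.mul_re, Complex.mul_im, mul_add, add_mul, smul_mul_assoc,
      mul_smul_comm, one_mul, mul_one, h, smul_smul]
    match_scalars <;> field_simp <;> ring

private lemma exp_of_sq_neg (a : M2) (t : ℝ) (ht : t ≠ 0)
    (h : a * a = (-(t*t)) • (1 : M2)) :
    exp a = Real.cos t • (1 : M2) + (Real.sin t / t) • a := by
  letI : SeminormedRing M2 := Matrix.linftyOpSemiNormedRing
  letI : NormedRing M2 := Matrix.linftyOpNormedRing
  letI : NormedAlgebra ℝ M2 := Matrix.linftyOpNormedAlgebra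
  have hcont : Continuous (phiC a t ht h) := by
    show Continuous fun z : ℂ => z.re • (1 : M2) + (z.im / t) • a
    fun_prop
  have h1 : phiC a t ht h ((t : ℂ) * Complex.I) = a := by
    show ((t : ℂ) * Complex.I).re • (1 : M2) + (((t : ℂ) * Complex.I).im / t) • a = a
    simp [div_self ht]
  have h2 := map_exp (phiC a t ht h) hcont ((t : ℂ) * Complex.I)
  rw [h1] at h2
  refine h2.symm.trans ?_
  have h3 : exp ((t : ℂ) * Complex.I) = Complex.exp ((t : ℂ) * Complex.I) := by
    rw [Complex.exp_eq_exp_ℂ]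
  rw [h3, Complex.exp_mul_I, ← Complex.ofReal_cos, ← Complex.ofReal_sin]
  simp only [phiC, RingHom.coe_mk, MonoidHom.coe_mk, OneHom.coe_mk]
  simp [Complex.cos_ofReal_re, Complex.sin_ofReal_re]

private noncomputable def phiR (a : M2) (t : ℝ) (ht : t ≠ 0) (h : a * a = (t*t) • (1 : M2)) :
    ℝ × ℝ →+* M2 where
  toFun z := ((z.1 + z.2)/2) • (1 : M2) + ((z.1 - z.2)/(2*t)) • a
  map_one' := by norm_num
  map_zero' := by simp
  map_add' x y := by
    simp only [Prod.fst_add, Prod.snd_add]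
    match_scalars <;> ring
  map_mul' x y := by
    simp only [Prod.fst_mul, Prod.snd_mul, mul_add, add_mul, smul_mul_assoc,
      mul_smul_comm, one_mul, mul_one, h, smul_smul]
    match_scalars <;> field_simp <;> ring

private lemma exp_of_sq_pos (a : M2) (t : ℝ) (ht : t ≠ 0)
    (h : a * a = (t*t) • (1 : M2)) :
    exp a = Real.cosh t • (1 : M2) + (Real.sinh t / t) • a := by
  letI : SeminormedRing M2 := Matrix.linftyOpSemiNormedRing
  letI : NormedRing M2 := Matrix.linftyOpNormedRing
  letI : NormedAlgebra ℝ M2 := Matrix.linftyOpNormedAlgebra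
  have hcont : Continuous (phiR a t ht h) := by
    show Continuous fun z : ℝ × ℝ => ((z.1 + z.2)/2) • (1 : M2) + ((z.1 - z.2)/(2*t)) • a
    fun_prop
  have h1 : phiR a t ht h ((t, -t)) = a := by
    show ((t + -t)/2) • (1 : M2) + ((t - -t)/(2*t)) • a = a
    have : (t - -t)/(2*t) = 1 := by field_simp; ring
    rw [this]; simp
  have h2 := map_exp (phiR a t ht h) hcont ((t, -t))
  rw [h1] at h2
  refine h2.symm.trans ?_
  have h3 : exp ((t, -t) : ℝ × ℝ) = (Real.exp t, Real.exp (-t)) := by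
    ext
    · rw [Prod.fst_exp]; exact (congrFun Real.exp_eq_exp_ℝ t).symm
    · rw [Prod.snd_exp]; exact (congrFun Real.exp_eq_exp_ℝ (-t)).symm
  rw [h3]
  show ((Real.exp t + Real.exp (-t))/2) • (1 : M2)
      + ((Real.exp t - Real.exp (-t))/(2*t)) • a = _
  rw [Real.cosh_eq, Real.sinh_eq]
  congr 1
  rw [div_div]

private lemma exp_of_sq_zero (a : M2) (h : a * a = 0) : exp a = 1 + a := by
  letI : SeminormedRing M2 := Matrix.linftyOpSemiNormedRing
  letI : NormedRing M2 := Matrix.linftyOpNormedRing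
  letI : NormedAlgebra ℝ M2 := Matrix.linftyOpNormedAlgebra
  rw [exp_eq_tsum ℝ]
  have hpow : ∀ n : ℕ, n ∉ ({0, 1} : Finset ℕ) → ((n.factorial : ℝ)⁻¹) • a ^ n = 0 := by
    intro n hn
    simp only [Finset.mem_insert, Finset.mem_singleton] at hn
    push_neg at hn
    obtain ⟨h0, h1⟩ := hn
    have h2 : 2 ≤ n := by omega
    have : a ^ n = a ^ 2 * a ^ (n - 2) := by
      rw [← pow_add]; congr 1; omega
    rw [this, sq, h, zero_mul, smul_zero]
  show (∑' (n : ℕ), ((n.factorial : ℝ))⁻¹ • a ^ n) = 1 + a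
  rw [tsum_eq_sum hpow]
  simp [Finset.sum_pair (by norm_num : (0:ℕ) ≠ 1)]

private lemma exp_smul_one (r : ℝ) :
    exp (r • (1 : M2)) = Real.exp r • (1 : M2) := by
  letI : SeminormedRing M2 := Matrix.linftyOpSemiNormedRing
  letI : NormedRing M2 := Matrix.linftyOpNormedRing
  letI : NormedAlgebra ℝ M2 := Matrix.linftyOpNormedAlgebra
  have := map_exp (algebraMap ℝ M2) (continuous_algebraMap ℝ M2) r
  rw [← congrFun Real.exp_eq_exp_ℝ r] at this
  rw [Algebra.algebraMap_eq_smul_one] at this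
  rw [this, Algebra.algebraMap_eq_smul_one]
  rfl

private lemma transpose_two (p q r s : ℝ) : (!![p, q; r, s])ᵀ = !![p, r; q, s] := by
  ext i j; fin_cases i <;> fin_cases j <;> rfl

private lemma smul_two (x p q r s : ℝ) :
    x • (!![p, q; r, s] : M2) = !![x*p, x*q; x*r, x*s] := by
  ext i j; fin_cases i <;> fin_cases j <;> simp [Matrix.smul_apply]

private lemma exists_b (G : M2) (hGsymm : Gᵀ = G) (hGdet : G.det < 0) :
    ∃ b : M2, bᵀ * G = G * b ∧ b.trace = 0 ∧ b.det = 1 := by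
  have hβ : G 1 0 = G 0 1 := by
    conv_lhs => rw [← hGsymm]
    rfl
  set α := G 0 0
  set β := G 0 1
  set γ := G 1 1
  have hΔ : α * γ - β ^ 2 < 0 := by
    have : G.det = α * γ - β * G 1 0 := Matrix.det_fin_two G
    rw [hβ] at this
    nlinarith [this]
  have hsq : Real.sqrt (β ^ 2 - α * γ) ^ 2 = β ^ 2 - α * γ :=
    Real.sq_sqrt (by linarith)
  have hne : β ^ 2 - α * γ ≠ 0 := by nlinarith
  set c := Real.sqrt (β ^ 2 - α * γ) / (α * γ - β ^ 2) with hc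
  have hc2 : c ^ 2 * (β ^ 2 - α * γ) = 1 := by
    rw [hc, div_pow, hsq, show (α*γ-β^2)^2 = (β^2-α*γ)*(β^2-α*γ) from by ring]
    field_simp
  by_cases hα : α ≠ 0
  · refine ⟨c • !![-β, γ - 2*β^2/α; α, β], ?_, ?_, ?_⟩
    · rw [Matrix.transpose_smul, transpose_two, Matrix.smul_mul, Matrix.mul_smul]
      have key : (!![-β, α; γ - 2*β^2/α, β] : M2) * G = G * !![-β, γ - 2*β^2/α; α, β] := by
        ext i j
        fin_cases i <;> fin_cases j <;>
          · simp [Matrix.mul_apply, Fin.sum_univ_two, hβ]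
            try field_simp
            try ring
      rw [key]
    · rw [smul_two, Matrix.trace_fin_two_of]; ring
    · rw [smul_two, Matrix.det_fin_two_of,
        show c*(-β)*(c*β) - c*(γ-2*β^2/α)*(c*α) = c^2*(β^2-α*γ) from by field_simp; ring]
      exact hc2
  · push_neg at hα
    by_cases hγ : γ ≠ 0
    · refine ⟨c • !![β, γ; (α*γ-2*β^2)/γ, -β], ?_, ?_, ?_⟩
      · rw [Matrix.transpose_smul, transpose_two, Matrix.smul_mul, Matrix.mul_smul]
        have key : (!![β, (α*γ-2*β^2)/γ; γ, -β] : M2) * G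
            = G * !![β, γ; (α*γ-2*β^2)/γ, -β] := by
          ext i j
          fin_cases i <;> fin_cases j <;>
            · simp [Matrix.mul_apply, Fin.sum_univ_two, hβ]
              try field_simp
              try ring
        rw [key]
      · rw [smul_two, Matrix.trace_fin_two_of]; ring
      · rw [smul_two, Matrix.det_fin_two_of,
          show c*β*(c*(-β)) - c*γ*(c*((α*γ-2*β^2)/γ)) = c^2*(β^2-α*γ) from by
            field_simp; ring]
        exact hc2
    · push_neg at hγ
      have h0 : G 0 0 = 0 := hα
      have h1 : G 1 1 = 0 := hγ
      refine ⟨!![0, 1; -1, 0], ?_, ?_, ?_⟩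
      · rw [transpose_two]
        ext i j
        fin_cases i <;> fin_cases j <;>
          · simp [Matrix.mul_apply, Fin.sum_univ_two, hβ, h0, h1]
            try ring
      · rw [Matrix.trace_fin_two_of]; ring
      · rw [Matrix.det_fin_two_of]; ring

private lemma forward (A : M2) (hAdet : A.det = 1) (a : M2) (ha : exp a = A) :
    -2 < A.trace ∨ A = -1 := by
  set τ := a.trace with hτ
  set b := a - (τ/2) • (1 : M2) with hbdef
  have h2 : (1 : M2).trace = 2 := by
    rw [Matrix.trace_one]; norm_num
  have hbtr : b.trace = 0 := by
    rw [hbdef, Matrix.trace_sub, Matrix.trace_smul, h2]; simp [hτ]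
  set δ := b.det with hδ
  have hsq : b * b = (-δ) • (1 : M2) := sq_of_traceless b hbtr
  have hsplit : a = (τ/2) • (1 : M2) + b := by rw [hbdef]; abel
  have hcomm : Commute ((τ/2) • (1 : M2)) b := (Commute.one_left b).smul_left _
  have hA : A = Real.exp (τ/2) • exp b := by
    rw [← ha, hsplit, Matrix.exp_add_of_commute ((τ/2) • (1 : M2)) b hcomm, exp_smul_one,
      smul_mul_assoc, one_mul]
  have hexpsq : Real.exp (τ/2) ^ 2 = Real.exp τ := by
    rw [sq, ← Real.exp_add]; congr 1; ring
  have key : ∀ c s : ℝ, exp b = c • (1 : M2) + s • b → c^2 + s^2 * δ = 1 →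
      τ = 0 ∧ A = c • (1 : M2) + s • b := by
    intro c s hexp hcs
    have hdetA : A.det = Real.exp τ := by
      rw [hA, Matrix.det_smul, hexp, det_comb b hbtr, hcs]
      simp [hexpsq]
    have hτ0 : τ = 0 := by
      rw [hAdet] at hdetA
      exact (Real.exp_eq_one_iff τ).mp hdetA.symm
    refine ⟨hτ0, ?_⟩
    rw [hA, hexp, hτ0]
    norm_num
  rcases lt_trichotomy δ 0 with hneg | hzero | hpos
  · -- δ < 0 : hyperbolic case
    set t := Real.sqrt (-δ) with htdef
    have ht2 : t * t = -δ := Real.mul_self_sqrt (by linarith)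
    have ht0 : t ≠ 0 := by
      intro h0; rw [h0] at ht2; simp at ht2; linarith
    have hexp := exp_of_sq_pos b t ht0 (by rw [ht2]; exact hsq)
    obtain ⟨hτ0, hAeq⟩ := key (Real.cosh t) (Real.sinh t / t) hexp (by
      have := Real.cosh_sq_sub_sinh_sq t
      field_simp
      nlinarith [ht2])
    left
    rw [hAeq, trace_comb b hbtr]
    have := Real.one_le_cosh t
    linarith
  · -- δ = 0 : nilpotent case
    have hexp : exp b = (1:ℝ) • (1 : M2) + (1:ℝ) • b := by
      rw [exp_of_sq_zero b (by rw [hsq, hzero]; simp)]; simp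
    obtain ⟨hτ0, hAeq⟩ := key 1 1 hexp (by rw [hzero]; ring)
    left
    rw [hAeq, trace_comb b hbtr]
    norm_num
  · -- δ > 0 : elliptic case
    set t := Real.sqrt δ with htdef
    have ht2 : t * t = δ := Real.mul_self_sqrt (by linarith)
    have ht0 : t ≠ 0 := by
      intro h0; rw [h0] at ht2; simp at ht2; linarith
    have hexp := exp_of_sq_neg b t ht0 (by rw [ht2]; exact hsq)
    obtain ⟨hτ0, hAeq⟩ := key (Real.cos t) (Real.sin t / t) hexp (by
      have := Real.sin_sq_add_cos_sq t
      field_simp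
      nlinarith [ht2])
    have htr : A.trace = 2 * Real.cos t := by rw [hAeq, trace_comb b hbtr]
    rcases lt_or_eq_of_le (Real.neg_one_le_cos t) with hc | hc
    · left; rw [htr]; linarith
    · right
      have hsin : Real.sin t = 0 := by
        have := Real.sin_sq_add_cos_sq t
        nlinarith
      rw [hAeq, ← hc, hsin]
      norm_num

private lemma gsym (G A : M2) (hAsymm : Aᵀ * G = G * A) (c s : ℝ) :
    (c • (1 : M2) + s • A)ᵀ * G = G * (c • (1 : M2) + s • A) := by
  simp only [Matrix.transpose_add, Matrix.transpose_smul, Matrix.transpose_one,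
    Matrix.add_mul, Matrix.mul_add, Matrix.smul_mul, Matrix.mul_smul,
    Matrix.one_mul, Matrix.mul_one, hAsymm]

private lemma backward (G A : M2) (hGsymm : Gᵀ = G) (hGdet : G.det < 0)
    (hAsymm : Aᵀ * G = G * A) (hAdet : A.det = 1)
    (h : -2 < A.trace ∨ A = -1) :
    ∃ a : M2, aᵀ * G = G * a ∧ exp a = A := by
  rcases h with h | h
  swap
  · -- A = -1 : rotation by π
    obtain ⟨b, hbsym, hbtr, hbdet⟩ := exists_b G hGsymm hGdet
    refine ⟨Real.pi • b, ?_, ?_⟩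
    · rw [Matrix.transpose_smul, Matrix.smul_mul, Matrix.mul_smul, hbsym]
    · have hbb : b * b = (-(1:ℝ)) • (1 : M2) := by
        rw [sq_of_traceless b hbtr, hbdet]
      have haa : (Real.pi • b) * (Real.pi • b) = (-(Real.pi * Real.pi)) • (1 : M2) := by
        rw [Matrix.smul_mul, Matrix.mul_smul, hbb, smul_smul, smul_smul]
        congr 1
        ring
      rw [exp_of_sq_neg _ Real.pi Real.pi_ne_zero haa, Real.cos_pi, Real.sin_pi, h]
      simp
  · -- -2 < trace A
    set τ := A.trace with hτ
    set B := A - (τ/2) • (1 : M2) with hBdef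
    have h2 : (1 : M2).trace = 2 := by rw [Matrix.trace_one]; norm_num
    have hBtr : B.trace = 0 := by
      rw [hBdef, Matrix.trace_sub, Matrix.trace_smul, h2]; simp [hτ]
    have hdetB : B.det = 1 - τ^2/4 := by
      have h1 : A.det = A 0 0 * A 1 1 - A 0 1 * A 1 0 := Matrix.det_fin_two A
      rw [hAdet] at h1
      have h3 : τ = A 0 0 + A 1 1 := Matrix.trace_fin_two A
      rw [hBdef, Matrix.det_fin_two]
      simp only [Matrix.sub_apply, Matrix.smul_apply, Matrix.one_apply_eq,
        Matrix.one_apply_ne, smul_eq_mul]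
      norm_num
      nlinarith [h1, h3]
    have hBB : B * B = (τ^2/4 - 1) • (1 : M2) := by
      rw [sq_of_traceless B hBtr, hdetB]
      congr 1
      ring
    have hsum : ∀ r : ℝ, r • B = (-(r * (τ/2))) • (1 : M2) + r • A := by
      intro r
      rw [hBdef]
      rw [smul_sub, smul_smul]
      module
    have hgsym : ∀ r : ℝ, (r • B)ᵀ * G = G * (r • B) := by
      intro r
      rw [hsum r]
      exact gsym G A hAsymm _ _
    have hfin : (τ/2) • (1 : M2) + B = A := by
      rw [hBdef]; abel
    rcases lt_trichotomy τ 2 with hlt | heq | hgt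
    · -- elliptic : -2 < τ < 2
      set t := Real.arccos (τ/2) with htdef
      have hb1 : -1 ≤ τ/2 := by linarith
      have hb2 : τ/2 ≤ 1 := by linarith
      have hcos : Real.cos t = τ/2 := Real.cos_arccos hb1 hb2
      have hsin2 : Real.sin t ^ 2 = 1 - (τ/2)^2 := by
        have := Real.sin_sq_add_cos_sq t
        rw [hcos] at this
        linarith
      have hsq2 : 0 < Real.sin t ^ 2 := by rw [hsin2]; nlinarith
      have hsinpos : 0 < Real.sin t := by
        have hnn := Real.sin_nonneg_of_nonneg_of_le_pi (Real.arccos_nonneg (τ/2))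
          (Real.arccos_le_pi (τ/2))
        rcases lt_or_eq_of_le hnn with h' | h'
        · exact h'
        · exfalso; rw [← h'] at hsq2; simp at hsq2
      have hs : Real.sin t ≠ 0 := ne_of_gt hsinpos
      have htpos : 0 < t := Real.arccos_pos.mpr (by linarith)
      have ht : t ≠ 0 := ne_of_gt htpos
      refine ⟨(t / Real.sin t) • B, hgsym _, ?_⟩
      have haa : ((t / Real.sin t) • B) * ((t / Real.sin t) • B)
          = (-(t*t)) • (1 : M2) := by
        rw [Matrix.smul_mul, Matrix.mul_smul, hBB, smul_smul, smul_smul]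
        congr 1
        field_simp
        nlinarith [hsin2]
      rw [exp_of_sq_neg _ t ht haa, smul_smul,
        show (Real.sin t / t) * (t / Real.sin t) = 1 from by field_simp, one_smul,
        hcos, hfin]
    · -- parabolic : τ = 2
      have hB : Bᵀ * G = G * B := by have := hgsym 1; rwa [one_smul] at this
      refine ⟨B, hB, ?_⟩
      have hBB0 : B * B = 0 := by
        rw [hBB, heq]
        norm_num
      rw [exp_of_sq_zero B hBB0, ← hfin, heq]
      norm_num
    · -- hyperbolic : τ > 2
      set s' := Real.sqrt ((τ/2)^2 - 1) with hs'def
      have hs'2 : s' ^ 2 = (τ/2)^2 - 1 := Real.sq_sqrt (by nlinarith)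
      have hs'pos : 0 < s' := Real.sqrt_pos.mpr (by nlinarith)
      set u := τ/2 + s' with hudef
      have hu1 : 1 < u := by
        have h3 : 1 < τ/2 := by linarith
        rw [hudef]; linarith
      have hupos : (0:ℝ) < u := by linarith
      set t := Real.log u with htdef
      have htpos : 0 < t := Real.log_pos hu1
      have ht : t ≠ 0 := ne_of_gt htpos
      have hexpt : Real.exp t = u := Real.exp_log hupos
      have hinv : Real.exp (-t) = τ/2 - s' := by
        rw [Real.exp_neg, hexpt]
        have hmul : (τ/2 - s') * u = 1 := by nlinarith [hs'2]
        rw [← eq_inv_of_mul_eq_one_left hmul]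
      have hcosh : Real.cosh t = τ/2 := by rw [Real.cosh_eq, hexpt, hinv]; ring
      have hsinh : Real.sinh t = s' := by rw [Real.sinh_eq, hexpt, hinv]; ring
      clear_value s' u t
      refine ⟨(t / s') • B, hgsym _, ?_⟩
      have haa : ((t / s') • B) * ((t / s') • B) = (t*t) • (1 : M2) := by
        rw [Matrix.smul_mul, Matrix.mul_smul, hBB, smul_smul, smul_smul]
        congr 1
        have hs0 : s' ≠ 0 := ne_of_gt hs'pos
        field_simp
        linear_combination (-4) * hs'2
      have hs'0 : s' ≠ 0 := ne_of_gt hs'pos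
      have hcoef : (s' / t) * (t / s') = 1 := by field_simp
      rw [exp_of_sq_pos _ t ht haa, hsinh, smul_smul, hcoef, one_smul, hcosh, hfin]

/-- For a Lorentzian inner product `g(u,v) = uᵀGv` on `ℝ²` and a `g`-symmetric
matrix `A` with `det A = 1`, there exists a `g`-symmetric matrix `a` with `exp a = A`
(i.e. `g` and `g(A·,·)` are joined by a geodesic in the space of Lorentzian inner products
with fixed volume form) if and only if `tr A > -2` or `A = -1`. -/
theorem geodesic_exists_iff (G A : Matrix (Fin 2) (Fin 2) ℝ)
    (hGsymm : Gᵀ = G) (hGdet : G.det < 0)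
    (hAsymm : Aᵀ * G = G * A) (hAdet : A.det = 1) :
    (∃ a : Matrix (Fin 2) (Fin 2) ℝ, aᵀ * G = G * a ∧ exp a = A) ↔
      (-2 < A.trace ∨ A = -1) := by
  constructor
  · rintro ⟨a, -, ha⟩
    exact forward A hAdet a ha
  · intro h
    exact backward G A hGsymm hGdet hAsymm hAdet h
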